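/- Let L ≥ 1, l₀ ≥ 0, let T̃ ∈ M_L(ℕ) and S ∈ M_L(ℕ), let X ∈ M_L(ℕ) be the tridiagonal 0–1 matrix (X_{kl} = 1 iff |k−l| ≤ 1), and set Ñ = [[2I, T̃+S+X],[I, I+S+X]] ∈ M_{2L}(ℕ) and M = [[I, S],[I, I]] ∈ M_{2L}(ℕ). Let T ∈ M_{L,L−l₀}(ℕ) be the restriction of T̃ to its first L−l₀ columns, N the corresponding restriction of Ñ (a 2L × (2L−l₀) matrix), I₁ the 2L × 2L identity, and I₀ its restriction to the first 2L−l₀ columns. Then coker(I₀ − N) ≅ coker T, ker(I₀ − N) ≅ ker T, coker(I₁ − M) ≅ coker S, and ker(I₁ − M) ≅ ker S. -/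

import Mathlib

section helpers
variable {A B C D : Type*} [AddCommGroup A] [AddCommGroup B] [AddCommGroup C] [AddCommGroup D]
  [Module ℤ A] [Module ℤ B] [Module ℤ C] [Module ℤ D]

lemma coker_helper (f : A →ₗ[ℤ] B) (g : C →ₗ[ℤ] D) (p : B →ₗ[ℤ] D) (j : D →ₗ[ℤ] B)
    (h1 : ∀ a, p (f a) ∈ LinearMap.range g)
    (h2 : ∀ c, j (g c) ∈ LinearMap.range f)
    (h3 : ∀ d, p (j d) = d)
    (h4 : ∀ b, b - j (p b) ∈ LinearMap.range f) :
    Nonempty ((B ⧸ LinearMap.range f) ≃+ (D ⧸ LinearMap.range g)) := by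
  have hp : LinearMap.range f ≤ Submodule.comap p (LinearMap.range g) := by
    rintro b ⟨a, rfl⟩; exact h1 a
  have hj : LinearMap.range g ≤ Submodule.comap j (LinearMap.range f) := by
    rintro d ⟨c, rfl⟩; exact h2 c
  refine ⟨{ toFun := Submodule.mapQ _ _ p hp
            invFun := Submodule.mapQ _ _ j hj
            left_inv := ?_
            right_inv := ?_
            map_add' := map_add _ }⟩
  · intro x
    obtain ⟨b, rfl⟩ := Submodule.Quotient.mk_surjective _ x
    simp only [Submodule.mapQ_apply]
    refine (Submodule.Quotient.eq _).mpr ?_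
    have := Submodule.neg_mem _ (h4 b)
    simpa using this
  · intro x
    obtain ⟨d, rfl⟩ := Submodule.Quotient.mk_surjective _ x
    simp [Submodule.mapQ_apply, h3]

lemma ker_helper (f : A →ₗ[ℤ] B) (g : C →ₗ[ℤ] D) (u : A →ₗ[ℤ] C) (s : C →ₗ[ℤ] A)
    (h1 : ∀ a, f a = 0 → g (u a) = 0) (h2 : ∀ c, g c = 0 → f (s c) = 0)
    (h3 : ∀ a, f a = 0 → s (u a) = a) (h4 : ∀ c, g c = 0 → u (s c) = c) :
    Nonempty (LinearMap.ker f ≃+ LinearMap.ker g) :=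
  ⟨{ toFun := fun a => ⟨u a.1, LinearMap.mem_ker.mpr (h1 a.1 (LinearMap.mem_ker.mp a.2))⟩
     invFun := fun c => ⟨s c.1, LinearMap.mem_ker.mpr (h2 c.1 (LinearMap.mem_ker.mp c.2))⟩
     left_inv := fun a => Subtype.ext (h3 a.1 (LinearMap.mem_ker.mp a.2))
     right_inv := fun c => Subtype.ext (h4 c.1 (LinearMap.mem_ker.mp c.2))
     map_add' := fun x y => Subtype.ext (map_add u _ _) }⟩

def elimL (α β : Type*) : (α → ℤ) →ₗ[ℤ] (α ⊕ β → ℤ) where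
  toFun u := Sum.elim u 0
  map_add' u v := by funext x; cases x <;> simp
  map_smul' r u := by funext x; cases x <;> simp

def elimR (α β : Type*) : (β → ℤ) →ₗ[ℤ] (α ⊕ β → ℤ) where
  toFun u := Sum.elim 0 u
  map_add' u v := by funext x; cases x <;> simp
  map_smul' r u := by funext x; cases x <;> simp

@[simp] lemma elimL_apply {α β : Type*} (u : α → ℤ) (x : α ⊕ β) :
    elimL α β u x = Sum.elim u (fun _ => (0:ℤ)) x := rfl

@[simp] lemma elimR_apply {α β : Type*} (u : β → ℤ) (x : α ⊕ β) :
    elimR α β u x = Sum.elim (fun _ => (0:ℤ)) u x := rfl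

end helpers

/-- Block matrix computation: with `T̃, S ∈ M_L(ℕ)`, `X` tridiagonal 0–1,
`Ñ = [[2I, T̃+S+X],[I, I+S+X]]`, `M = [[I,S],[I,I]]`, `T` the first `L−l₀` columns of
`T̃`, `N`, `I₀` the corresponding column-restrictions of `Ñ` and of the identity `I₁`,
one has `coker(I₀−N) ≅ coker T`, `ker(I₀−N) ≅ ker T`, `coker(I₁−M) ≅ coker S`, and
`ker(I₁−M) ≅ ker S`. -/
theorem stmt16 (L l₀ : ℕ) (hL : 1 ≤ L) (hl₀ : l₀ ≤ L)
    (Tt S : Matrix (Fin L) (Fin L) ℤ)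
    (hTt : ∀ i j, 0 ≤ Tt i j) (hS : ∀ i j, 0 ≤ S i j) :
    let X : Matrix (Fin L) (Fin L) ℤ :=
      Matrix.of fun k l => if (k : ℕ) ≤ (l : ℕ) + 1 ∧ (l : ℕ) ≤ (k : ℕ) + 1 then 1 else 0
    let Ntilde : Matrix (Fin L ⊕ Fin L) (Fin L ⊕ Fin L) ℤ :=
      Matrix.fromBlocks ((2 : ℤ) • (1 : Matrix (Fin L) (Fin L) ℤ)) (Tt + S + X)
        (1 : Matrix (Fin L) (Fin L) ℤ) ((1 : Matrix (Fin L) (Fin L) ℤ) + S + X)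
    let M : Matrix (Fin L ⊕ Fin L) (Fin L ⊕ Fin L) ℤ :=
      Matrix.fromBlocks 1 S 1 1
    let T : Matrix (Fin L) (Fin (L - l₀)) ℤ :=
      Matrix.of fun k j => Tt k (Fin.castLE (Nat.sub_le L l₀) j)
    let N : Matrix (Fin L ⊕ Fin L) (Fin L ⊕ Fin (L - l₀)) ℤ :=
      Matrix.of fun k l => Ntilde k (Sum.map id (Fin.castLE (Nat.sub_le L l₀)) l)
    let I₁ : Matrix (Fin L ⊕ Fin L) (Fin L ⊕ Fin L) ℤ := 1
    let I₀ : Matrix (Fin L ⊕ Fin L) (Fin L ⊕ Fin (L - l₀)) ℤ :=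
      Matrix.of fun k l => I₁ k (Sum.map id (Fin.castLE (Nat.sub_le L l₀)) l)
    Nonempty (((Fin L ⊕ Fin L → ℤ) ⧸ LinearMap.range (I₀ - N).mulVecLin) ≃+
        ((Fin L → ℤ) ⧸ LinearMap.range T.mulVecLin)) ∧
    Nonempty (LinearMap.ker (I₀ - N).mulVecLin ≃+ LinearMap.ker T.mulVecLin) ∧
    Nonempty (((Fin L ⊕ Fin L → ℤ) ⧸ LinearMap.range (I₁ - M).mulVecLin) ≃+
        ((Fin L → ℤ) ⧸ LinearMap.range S.mulVecLin)) ∧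
    Nonempty (LinearMap.ker (I₁ - M).mulVecLin ≃+ LinearMap.ker S.mulVecLin) := by
  intro X Ntilde M T N I₁ I₀
  set cst := Fin.castLE (Nat.sub_le L l₀) with hcst
  set A' : Matrix (Fin L) (Fin (L - l₀)) ℤ := (Tt + S + X).submatrix id cst with hA'
  set B' : Matrix (Fin L) (Fin (L - l₀)) ℤ := (S + X).submatrix id cst with hB'
  have hNt : Ntilde = Matrix.fromBlocks ((1:Matrix (Fin L) (Fin L) ℤ) + 1) (Tt + S + X) 1
      (1 + S + X) := by
    rw [show Ntilde = Matrix.fromBlocks ((2:ℤ) • (1:Matrix (Fin L) (Fin L) ℤ)) (Tt + S + X) 1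
      (1 + S + X) from rfl, two_smul]
  have hN : I₀ - N = Matrix.fromBlocks (-1) (-A') (-1) (-B') := by
    ext k l
    cases k <;> cases l <;>
      simp [I₀, N, hNt, I₁, hA', hB', hcst, Matrix.one_apply,
        Matrix.submatrix_apply, Matrix.add_apply] <;>
      try split <;> ring
  have hM : I₁ - M = Matrix.fromBlocks 0 (-S) (-1) 0 := by
    ext k l
    cases k <;> cases l <;>
      simp [M, I₁, Matrix.one_apply]
  have hT : ∀ w : Fin (L - l₀) → ℤ, T.mulVec w = A'.mulVec w - B'.mulVec w := by
    intro w
    have : T = A' - B' := by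
      ext i j
      simp [T, hA', hB', Matrix.sub_apply, Matrix.submatrix_apply, Matrix.add_apply]
      try ring
    rw [this, Matrix.sub_mulVec]
  have hTp : ∀ (w : Fin (L - l₀) → ℤ) (i : Fin L),
      T.mulVec w i = A'.mulVec w i - B'.mulVec w i := by
    intro w i
    rw [hT, Pi.sub_apply]
  have hBl : ∀ (x : Fin L ⊕ Fin (L - l₀) → ℤ) (i : Fin L),
      (I₀ - N).mulVec x (Sum.inl i)
        = -(x (Sum.inl i)) - A'.mulVec (fun j => x (Sum.inr j)) i := by
    intro x i
    simp [hN, Matrix.mulVecLin_apply, Matrix.fromBlocks_mulVec, Matrix.neg_mulVec,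
      Matrix.one_mulVec, Function.comp_def, sub_eq_add_neg]
  have hBr : ∀ (x : Fin L ⊕ Fin (L - l₀) → ℤ) (i : Fin L),
      (I₀ - N).mulVec x (Sum.inr i)
        = -(x (Sum.inl i)) - B'.mulVec (fun j => x (Sum.inr j)) i := by
    intro x i
    simp [hN, Matrix.mulVecLin_apply, Matrix.fromBlocks_mulVec, Matrix.neg_mulVec,
      Matrix.one_mulVec, Function.comp_def, sub_eq_add_neg]
  have hMl : ∀ (x : Fin L ⊕ Fin L → ℤ) (i : Fin L),
      (I₁ - M).mulVec x (Sum.inl i) = -(S.mulVec (fun j => x (Sum.inr j)) i) := by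
    intro x i
    simp [hM, Matrix.mulVecLin_apply, Matrix.fromBlocks_mulVec, Matrix.neg_mulVec,
      Function.comp_def]
  have hMr : ∀ (x : Fin L ⊕ Fin L → ℤ) (i : Fin L),
      (I₁ - M).mulVec x (Sum.inr i) = -(x (Sum.inl i)) := by
    intro x i
    simp [hM, Matrix.mulVecLin_apply, Matrix.fromBlocks_mulVec, Matrix.neg_mulVec,
      Matrix.one_mulVec, Function.comp_def]
  have hfr : ∀ (a : Fin L ⊕ Fin (L - l₀) → ℤ),
      (LinearMap.funLeft ℤ ℤ Sum.inr) a = fun j => a (Sum.inr j) := fun _ => rfl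
  have hfr2 : ∀ (a : Fin L ⊕ Fin L → ℤ),
      (LinearMap.funLeft ℤ ℤ (Sum.inr : Fin L → Fin L ⊕ Fin L)) a
        = fun j => a (Sum.inr j) := fun _ => rfl
  have hfl2 : ∀ (a : Fin L ⊕ Fin L → ℤ),
      (LinearMap.funLeft ℤ ℤ (Sum.inl : Fin L → Fin L ⊕ Fin L)) a
        = fun j => a (Sum.inl j) := fun _ => rfl
  refine ⟨?_, ?_, ?_, ?_⟩
  · -- coker of I₀ - N
    refine coker_helper _ _
      (LinearMap.funLeft ℤ ℤ Sum.inr - LinearMap.funLeft ℤ ℤ Sum.inl)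
      (elimR (Fin L) (Fin L)) ?_ ?_ ?_ ?_
    · intro a
      refine ⟨fun j => a (Sum.inr j), ?_⟩
      funext i
      simp only [Matrix.mulVecLin_apply, LinearMap.sub_apply, Pi.sub_apply, hfr2, hfl2,
        hBl, hBr, hTp]
      ring
    · intro c
      refine ⟨Sum.elim (-(A'.mulVec c)) c, ?_⟩
      funext k
      cases k with
      | inl i =>
        simp only [Matrix.mulVecLin_apply, hBl, Matrix.mulVecLin_apply, Sum.elim_inl, Sum.elim_inr, elimR_apply,
          Pi.neg_apply]
        ring
      | inr i =>
        simp only [Matrix.mulVecLin_apply, hBr, Matrix.mulVecLin_apply, Sum.elim_inl, Sum.elim_inr, elimR_apply,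
          Pi.neg_apply, hTp]
        ring
    · intro d
      funext i
      simp
    · intro b
      refine ⟨Sum.elim (fun j => -(b (Sum.inl j))) 0, ?_⟩
      funext k
      cases k with
      | inl i =>
        simp only [Matrix.mulVecLin_apply, hBl, Sum.elim_inl, Sum.elim_inr, Pi.sub_apply, elimR_apply,
          LinearMap.sub_apply, hfr2, hfl2, Pi.zero_apply]
        rw [show A'.mulVec (fun j => (0:ℤ)) = 0 from Matrix.mulVec_zero A']
        simp
      | inr i =>
        simp only [Matrix.mulVecLin_apply, hBr, Sum.elim_inl, Sum.elim_inr, Pi.sub_apply, elimR_apply,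
          LinearMap.sub_apply, hfr2, hfl2, Pi.zero_apply]
        rw [show B'.mulVec (fun j => (0:ℤ)) = 0 from Matrix.mulVec_zero B']
        simp
        try ring
  · -- ker of I₀ - N
    set s₁ : (Fin (L - l₀) → ℤ) →ₗ[ℤ] (Fin L ⊕ Fin (L - l₀) → ℤ) :=
      elimL (Fin L) (Fin (L - l₀)) ∘ₗ (-(A'.mulVecLin)) + elimR (Fin L) (Fin (L - l₀))
      with hs₁
    have hscl : ∀ (c : Fin (L - l₀) → ℤ) (i : Fin L), s₁ c (Sum.inl i) = -(A'.mulVec c i) := by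
      intro c i
      simp [hs₁]
    have hscr : ∀ (c : Fin (L - l₀) → ℤ) (j : Fin (L - l₀)), s₁ c (Sum.inr j) = c j := by
      intro c j
      simp [hs₁]
    refine ker_helper _ _ (LinearMap.funLeft ℤ ℤ Sum.inr) s₁ ?_ ?_ ?_ ?_
    · intro a ha
      funext i
      have e1 := congrFun ha (Sum.inl i)
      have e2 := congrFun ha (Sum.inr i)
      simp only [Matrix.mulVecLin_apply, hBl] at e1
      simp only [Matrix.mulVecLin_apply, hBr] at e2
      simp only [Pi.zero_apply] at e1 e2
      simp only [Matrix.mulVecLin_apply, hfr, hTp, Pi.zero_apply]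
      linarith
    · intro c hc
      funext k
      cases k with
      | inl i =>
        simp only [Matrix.mulVecLin_apply, hBl, hscl, hscr, Pi.zero_apply]
        ring
      | inr i =>
        have e := congrFun hc i
        simp only [Matrix.mulVecLin_apply, Pi.zero_apply, hTp] at e
        simp only [Matrix.mulVecLin_apply, hBr, hscl, hscr, Pi.zero_apply]
        linarith
    · intro a ha
      funext k
      cases k with
      | inl i =>
        have e1 := congrFun ha (Sum.inl i)
        simp only [Matrix.mulVecLin_apply, hBl, Pi.zero_apply] at e1
        simp only [hscl, hfr]
        linarith
      | inr i =>
        simp only [hscr, hfr]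
    · intro c hc
      funext i
      simp [hfr, hscr]
  · -- coker of I₁ - M
    refine coker_helper _ _ (-(LinearMap.funLeft ℤ ℤ Sum.inl)) (-(elimL (Fin L) (Fin L)))
      ?_ ?_ ?_ ?_
    · intro a
      refine ⟨fun j => a (Sum.inr j), ?_⟩
      funext i
      simp only [Matrix.mulVecLin_apply, LinearMap.neg_apply, Pi.neg_apply, hfl2, hMl]
      ring
    · intro c
      refine ⟨Sum.elim 0 c, ?_⟩
      funext k
      cases k with
      | inl i =>
        simp only [Matrix.mulVecLin_apply, hMl, Matrix.mulVecLin_apply, LinearMap.neg_apply, Pi.neg_apply,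
          elimL_apply, Sum.elim_inl, Sum.elim_inr, Pi.zero_apply]
        try rw [show S.mulVec (fun j => Sum.elim (0 : Fin L → ℤ) c (Sum.inr j)) = S.mulVec c
          from by congr 1]
      | inr i =>
        simp only [Matrix.mulVecLin_apply, hMr, Matrix.mulVecLin_apply, LinearMap.neg_apply, Pi.neg_apply,
          elimL_apply, Sum.elim_inl, Sum.elim_inr]
        simp
    · intro d
      funext i
      simp
    · intro b
      refine ⟨Sum.elim (fun j => -(b (Sum.inr j))) 0, ?_⟩
      funext k
      cases k with
      | inl i =>
        simp only [Matrix.mulVecLin_apply, hMl, Sum.elim_inl, Sum.elim_inr, Pi.sub_apply, LinearMap.neg_apply,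
          Pi.neg_apply, elimL_apply, hfl2, Pi.zero_apply]
        rw [show S.mulVec (fun j => (0:ℤ)) = 0 from Matrix.mulVec_zero S]
        simp
      | inr i =>
        simp only [Matrix.mulVecLin_apply, hMr, Sum.elim_inl, Sum.elim_inr, Pi.sub_apply, LinearMap.neg_apply,
          Pi.neg_apply, elimL_apply, hfl2]
        simp
  · -- ker of I₁ - M
    refine ker_helper _ _ (LinearMap.funLeft ℤ ℤ Sum.inr) (elimR (Fin L) (Fin L)) ?_ ?_ ?_ ?_
    · intro a ha
      funext i
      have e := congrFun ha (Sum.inl i)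
      simp only [Matrix.mulVecLin_apply, hMl] at e
      simp only [Pi.zero_apply] at e
      simp only [Matrix.mulVecLin_apply, hfr2, Pi.zero_apply]
      linarith
    · intro c hc
      funext k
      cases k with
      | inl i =>
        have e := congrFun hc i
        simp only [Matrix.mulVecLin_apply, Pi.zero_apply] at e
        simp only [Matrix.mulVecLin_apply, hMl, Pi.zero_apply, elimR_apply, Sum.elim_inr]
        simp [e]
      | inr i =>
        simp only [Matrix.mulVecLin_apply, hMr, Pi.zero_apply, elimR_apply, Sum.elim_inl]
        ring
    · intro a ha
      funext k
      cases k with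
      | inl i =>
        have e := congrFun ha (Sum.inr i)
        simp only [Matrix.mulVecLin_apply, hMr] at e
        simp only [Pi.zero_apply] at e
        simp only [elimR_apply, Sum.elim_inl, hfr2]
        linarith
      | inr i =>
        simp [hfr2]
    · intro c hc
      funext i
      simp [hfr2]
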